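/- If a topological space X is the union of finitely many closed subspaces, each of which is (homeomorphic to) a linearly ordered topological space, then the set LO(X) of points at which X is locally ordered (i.e., points having an open neighborhood that is a linearly ordered topological space in the subspace topology) is an open and dense subset of X. -/

import Mathlib

open Set Topology

universe u

/-- A topological space is a LOTS if it is homeomorphic to a linear order with the order topology. -/
def IsLOTS (Y : Type u) [TopologicalSpace Y] : Prop :=
  ∃ (L : Type u) (lo : LinearOrder L) (ts : TopologicalSpace L),
    @OrderTopology L ts lo.toPartialOrder.toPreorder ∧ Nonempty (Y ≃ₜ L)

/-- The set of locally ordered points of `X`. -/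
def LO (X : Type u) [TopologicalSpace X] : Set X :=
  {x | ∃ U : Set X, IsOpen U ∧ x ∈ U ∧ IsLOTS ↥U}

/-- Orderly open sets. -/
def Orderly {X : Type u} [TopologicalSpace X] (U : Set X) : Prop :=
  IsOpen U ∧ U = interior (closure U) ∧ IsConnected U ∧
    (closure U \ U).Finite ∧ closure U \ U ⊆ LO X

/-- Topology of pointwise convergence on the homeomorphism group. -/
instance homPt (X : Type u) [TopologicalSpace X] : TopologicalSpace (X ≃ₜ X) :=
  TopologicalSpace.induced (fun f => (f : X → X)) Pi.topologicalSpace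

lemma isLOTS_of_homeomorph {Y Z : Type u} [TopologicalSpace Y] [TopologicalSpace Z]
    (h : IsLOTS Y) (e : Z ≃ₜ Y) : IsLOTS Z := by
  obtain ⟨M, lo, ts, hot, ⟨f⟩⟩ := h
  exact ⟨M, lo, ts, hot, ⟨e.trans f⟩⟩

lemma exists_ordConnected_open {M : Type u} [LinearOrder M] [TopologicalSpace M]
    [OrderTopology M] {U : Set M} (hU : IsOpen U) :
    ∀ y ∈ U, ∃ C : Set M, IsOpen C ∧ C.OrdConnected ∧ y ∈ C ∧ C ⊆ U := by
  have h : TopologicalSpace.GenerateOpen { s : Set M | ∃ a, s = Ioi a ∨ s = Iio a } U := by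
    rw [OrderTopology.topology_eq_generate_intervals (α := M)] at hU
    exact hU
  clear hU
  induction h with
  | basic s hs =>
    intro y hy
    obtain ⟨a, rfl | rfl⟩ := hs
    · exact ⟨Ioi a, isOpen_Ioi, ordConnected_Ioi, hy, subset_rfl⟩
    · exact ⟨Iio a, isOpen_Iio, ordConnected_Iio, hy, subset_rfl⟩
  | univ => exact fun y hy => ⟨univ, isOpen_univ, ordConnected_univ, hy, subset_rfl⟩
  | inter s t _ _ ihs iht =>
    intro y hy
    obtain ⟨Cs, h1, h2, h3, h4⟩ := ihs y hy.1
    obtain ⟨Ct, h1', h2', h3', h4'⟩ := iht y hy.2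
    exact ⟨Cs ∩ Ct, h1.inter h1', h2.inter h2', ⟨h3, h3'⟩, inter_subset_inter h4 h4'⟩
  | sUnion S _ ih =>
    intro y hy
    obtain ⟨s, hsS, hys⟩ := hy
    obtain ⟨C, h1, h2, h3, h4⟩ := ih s hsS y hys
    exact ⟨C, h1, h2, h3, h4.trans (subset_sUnion_of_mem hsS)⟩

/-- If X is a finite union of closed subspaces each of which is a LOTS,
then LO(X) is open and dense in X. -/
theorem stmt_0 {X : Type u} [TopologicalSpace X] (n : ℕ) (L : Fin n → Set X)
    (hclosed : ∀ i, IsClosed (L i)) (hlots : ∀ i, IsLOTS ↥(L i))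
    (hcover : ⋃ i, L i = Set.univ) :
    IsOpen (LO X) ∧ Dense (LO X) := by
  classical
  constructor
  · rw [isOpen_iff_forall_mem_open]
    rintro x ⟨U, hUo, hxU, hUl⟩
    exact ⟨U, fun z hz => ⟨U, hUo, hz, hUl⟩, hUo, hxU⟩
  · rw [dense_iff_inter_open]
    rintro V hVopen ⟨x, hxV⟩
    set f : X → Finset (Fin n) := fun z => Finset.univ.filter (fun i => z ∈ L i) with hf
    -- choose a point of V lying in a minimal number of the pieces
    have hTne : ((fun z => (f z).card) '' V).Nonempty := ⟨_, x, hxV, rfl⟩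
    obtain ⟨y, hyV, hycard⟩ := Nat.sInf_mem hTne
    have hmin : ∀ z ∈ V, (f y).card ≤ (f z).card := fun z hz =>
      hycard.le.trans (Nat.sInf_le ⟨z, hz, rfl⟩)
    set W : Set X := V ∩ ⋂ i ∈ ((f y)ᶜ : Finset (Fin n)), (L i)ᶜ with hWdef
    have hWopen : IsOpen W :=
      hVopen.inter (isOpen_biInter_finset fun i _ => (hclosed i).isOpen_compl)
    have hyW : y ∈ W := by
      refine ⟨hyV, ?_⟩
      simp only [mem_iInter]
      intro i hi
      have : i ∉ f y := by simpa using hi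
      simpa [hf] using this
    obtain ⟨i₀, hyi₀⟩ : ∃ i, y ∈ L i := by
      have : y ∈ ⋃ i, L i := by rw [hcover]; trivial
      exact mem_iUnion.1 this
    have hi₀ : i₀ ∈ f y := by simp [hf, hyi₀]
    have hWL : W ⊆ L i₀ := by
      intro z hz
      have hsub : f z ⊆ f y := by
        intro i hi
        by_contra hcon
        have hzc : z ∈ (L i)ᶜ := by
          have h2 := hz.2
          simp only [mem_iInter] at h2
          exact h2 i (by simpa using hcon)
        exact hzc (by simpa [hf] using hi)
      have heq : f z = f y := Finset.eq_of_subset_of_card_le hsub (hmin z hz.1)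
      have : i₀ ∈ f z := heq ▸ hi₀
      simpa [hf] using this
    -- now use the LOTS structure on L i₀
    obtain ⟨M, lo, ts, hot, ⟨e⟩⟩ := hlots i₀
    letI := lo; letI := ts
    haveI : OrderTopology M := hot
    set W' : Set ↥(L i₀) := Subtype.val ⁻¹' W with hW'def
    have hW'open : IsOpen W' := hWopen.preimage continuous_subtype_val
    set y' : ↥(L i₀) := ⟨y, hyi₀⟩ with hy'def
    have hy'W' : y' ∈ W' := hyW
    have hW''open : IsOpen (e '' W') := e.isOpen_image.2 hW'open
    obtain ⟨C, hCopen, hCconn, hyC, hCsub⟩ :=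
      exists_ordConnected_open hW''open (e y') ⟨y', hy'W', rfl⟩
    haveI : OrdConnected C := hCconn
    set A : Set ↥(L i₀) := e ⁻¹' C with hAdef
    have hAopen : IsOpen A := e.isOpen_preimage.2 hCopen
    have hAW' : A ⊆ W' := by
      intro a ha
      obtain ⟨b, hb, heq⟩ := hCsub ha
      rwa [← e.injective heq]
    set U₀ : Set X := Subtype.val '' A with hU₀def
    have hU₀W : U₀ ⊆ W := by rintro _ ⟨a, ha, rfl⟩; exact hAW' ha
    obtain ⟨O, hOopen, hOeq⟩ := isOpen_induced_iff.1 hAopen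
    have hU₀eq : U₀ = O ∩ W := by
      apply Subset.antisymm
      · rintro _ ⟨a, ha, rfl⟩
        refine ⟨?_, hAW' ha⟩
        have : a ∈ Subtype.val ⁻¹' O := by rw [hOeq]; exact ha
        exact this
      · rintro z ⟨hzO, hzW⟩
        have hzL : z ∈ L i₀ := hWL hzW
        refine ⟨⟨z, hzL⟩, ?_, rfl⟩
        rw [← hOeq]; exact hzO
    have hU₀open : IsOpen U₀ := hU₀eq ▸ hOopen.inter hWopen
    have hyU₀ : y ∈ U₀ := ⟨y', hyC, rfl⟩
    -- build a homeomorphism ↥U₀ ≃ₜ ↥C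
    have hemb : Topology.IsEmbedding (fun a : ↥A => ((a : ↥(L i₀)) : X)) :=
      Topology.IsEmbedding.subtypeVal.comp Topology.IsEmbedding.subtypeVal
    have hrange : Set.range (fun a : ↥A => ((a : ↥(L i₀)) : X)) = U₀ := by
      have : (fun a : ↥A => ((a : ↥(L i₀)) : X)) =
          (Subtype.val : ↥(L i₀) → X) ∘ (Subtype.val : ↥A → ↥(L i₀)) := rfl
      rw [this, Set.range_comp, Subtype.range_val]
    have e1 : ↥U₀ ≃ₜ ↥A :=
      (Homeomorph.setCongr hrange).symm.trans (hemb.toHomeomorph).symm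
    have e2 : ↥A ≃ₜ ↥C := (e.image A).trans (Homeomorph.setCongr (e.image_preimage C))
    have hCL : IsLOTS ↥C :=
      ⟨↥C, inferInstance, inferInstance, orderTopology_of_ordConnected, ⟨Homeomorph.refl _⟩⟩
    exact ⟨y, hyV, U₀, hU₀open, hyU₀, isLOTS_of_homeomorph hCL (e1.trans e2)⟩
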